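/- arXiv:1507.06400 — 5 statements merged into one kernel-verified Lean document; each statement's English description precedes it below -/
import Mathlib

section
/- For all parameters α > 0, λ > 0, c > 0, β > 0, the OGE-G probability density function f(x; α, λ, c, β) integrates to 1 over (0, ∞): ∫₀^∞ α β λ e^{c x} · exp((λ/c)·(e^{c x} - 1)) · exp(-α·(exp((λ/c)·(e^{c x} - 1)) - 1)) · (1 - exp(-α·(exp((λ/c)·(e^{c x} - 1)) - 1)))^{β - 1} dx = 1. -/
open Real MeasureTheory Set Filter Topology

/-- The probability density function of the OGE-G distribution. -/
noncomputable def ogeG_pdf (α lam c β x : ℝ) : ℝ :=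
  α * β * lam * Real.exp (c * x) * Real.exp (lam / c * (Real.exp (c * x) - 1)) *
    Real.exp (-α * (Real.exp (lam / c * (Real.exp (c * x) - 1)) - 1)) *
    (1 - Real.exp (-α * (Real.exp (lam / c * (Real.exp (c * x) - 1)) - 1))) ^ (β - 1)

/-- The OGE-G probability density function integrates to `1` over `(0, ∞)`. -/
theorem ogeG_pdf_integral_eq_one (α lam c β : ℝ)
    (hα : 0 < α) (hlam : 0 < lam) (hc : 0 < c) (hβ : 0 < β) :
    ∫ x in Set.Ioi (0 : ℝ), ogeG_pdf α lam c β x = 1 := by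
  set u : ℝ → ℝ := fun x => 1 - Real.exp (-α * (Real.exp (lam / c * (Real.exp (c * x) - 1)) - 1))
    with hu_def
  set F : ℝ → ℝ := fun x => u x ^ β with hF_def
  -- derivative of u
  have hu : ∀ x : ℝ, HasDerivAt u
      (α * lam * Real.exp (c * x) * Real.exp (lam / c * (Real.exp (c * x) - 1)) *
        Real.exp (-α * (Real.exp (lam / c * (Real.exp (c * x) - 1)) - 1))) x := by
    intro x
    have h1 : HasDerivAt (fun x : ℝ => c * x) c x := by
      simpa using (hasDerivAt_id x).const_mul c
    have h2 : HasDerivAt (fun x : ℝ => Real.exp (c * x)) (c * Real.exp (c * x)) x := by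
      simpa [mul_comm] using h1.exp
    have h3 : HasDerivAt (fun x : ℝ => lam / c * (Real.exp (c * x) - 1))
        (lam * Real.exp (c * x)) x := by
      have := ((h2.sub_const 1).const_mul (lam / c))
      refine this.congr_deriv ?_
      field_simp
    have h4 : HasDerivAt (fun x : ℝ => Real.exp (lam / c * (Real.exp (c * x) - 1)))
        (lam * Real.exp (c * x) * Real.exp (lam / c * (Real.exp (c * x) - 1))) x := by
      simpa [mul_comm] using h3.exp
    have h5 : HasDerivAt (fun x : ℝ =>
        -α * (Real.exp (lam / c * (Real.exp (c * x) - 1)) - 1))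
        (-α * (lam * Real.exp (c * x) * Real.exp (lam / c * (Real.exp (c * x) - 1)))) x :=
      (h4.sub_const 1).const_mul (-α)
    have h6 := h5.exp
    have h7 := (h6.const_sub 1)
    refine h7.congr_deriv ?_
    ring
  -- u x ∈ (0,1) for x > 0
  have hinner_pos : ∀ x : ℝ, 0 < x →
      0 < Real.exp (lam / c * (Real.exp (c * x) - 1)) - 1 := by
    intro x hx
    have h1 : (1 : ℝ) < Real.exp (c * x) := by
      have h0 : 0 < c * x := mul_pos hc hx
      simpa using Real.exp_lt_exp.mpr h0
    have h2 : 0 < lam / c * (Real.exp (c * x) - 1) :=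
      mul_pos (div_pos hlam hc) (by linarith)
    have := Real.exp_lt_exp.mpr h2
    simp only [Real.exp_zero] at this
    linarith
  have hu_pos : ∀ x : ℝ, 0 < x → 0 < u x := by
    intro x hx
    have h2 : -α * (Real.exp (lam / c * (Real.exp (c * x) - 1)) - 1) < 0 := by
      have := hinner_pos x hx
      nlinarith
    have := Real.exp_lt_one_iff.mpr h2
    simp only [hu_def]
    linarith
  have hu_lt_one : ∀ x : ℝ, u x < 1 := by
    intro x
    simp only [hu_def]
    have := Real.exp_pos (-α * (Real.exp (lam / c * (Real.exp (c * x) - 1)) - 1))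
    linarith
  -- derivative of F on Ioi 0
  have hF : ∀ x ∈ Set.Ioi (0 : ℝ), HasDerivAt F (ogeG_pdf α lam c β x) x := by
    intro x hx
    have h := (hu x).rpow_const (p := β) (Or.inl (ne_of_gt (hu_pos x hx)))
    convert h using 1
    simp only [ogeG_pdf, hu_def]
    ring
  -- nonnegativity of the pdf on Ioi 0
  have hnonneg : ∀ x ∈ Set.Ioi (0 : ℝ), 0 ≤ ogeG_pdf α lam c β x := by
    intro x hx
    have h1 : (0:ℝ) ≤ (1 - Real.exp (-α * (Real.exp (lam / c * (Real.exp (c * x) - 1)) - 1))) ^ (β - 1) :=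
      Real.rpow_nonneg (le_of_lt (hu_pos x hx)) _
    have e1 := (Real.exp_pos (c * x)).le
    have e2 := (Real.exp_pos (lam / c * (Real.exp (c * x) - 1))).le
    have e3 := (Real.exp_pos (-α * (Real.exp (lam / c * (Real.exp (c * x) - 1)) - 1))).le
    simp only [ogeG_pdf]
    positivity
  -- continuity of F at 0 from the right
  have hu_cont : Continuous u := by
    simp only [hu_def]
    fun_prop
  have hFcont : ContinuousWithinAt F (Set.Ici (0:ℝ)) 0 := by
    have : ContinuousAt F 0 :=
      ContinuousAt.rpow_const hu_cont.continuousAt (Or.inr hβ.le)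
    exact this.continuousWithinAt
  -- limit of F at top
  have htend : Tendsto F atTop (𝓝 1) := by
    have h1 : Tendsto (fun x : ℝ => c * x) atTop atTop :=
      Tendsto.const_mul_atTop hc tendsto_id
    have h2 : Tendsto (fun x : ℝ => Real.exp (c * x)) atTop atTop :=
      Real.tendsto_exp_atTop.comp h1
    have h3 : Tendsto (fun x : ℝ => lam / c * (Real.exp (c * x) - 1)) atTop atTop :=
      Tendsto.const_mul_atTop (div_pos hlam hc) (tendsto_atTop_add_const_right _ (-1) h2)
    have h4 : Tendsto (fun x : ℝ => Real.exp (lam / c * (Real.exp (c * x) - 1))) atTop atTop :=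
      Real.tendsto_exp_atTop.comp h3
    have h5 : Tendsto (fun x : ℝ => -α * (Real.exp (lam / c * (Real.exp (c * x) - 1)) - 1))
        atTop atBot := by
      apply Tendsto.const_mul_atTop_of_neg (neg_lt_zero.mpr hα)
      exact tendsto_atTop_add_const_right _ (-1) h4
    have h6 : Tendsto u atTop (𝓝 1) := by
      have := Real.tendsto_exp_atBot.comp h5
      simpa [hu_def] using (tendsto_const_nhds.sub this)
    have h7 : Tendsto F atTop (𝓝 ((1:ℝ) ^ β)) :=
      ((Real.continuousAt_rpow_const 1 β (Or.inl one_ne_zero)).tendsto).comp h6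
    simpa using h7
  have key := integral_Ioi_of_hasDerivAt_of_nonneg hFcont hF hnonneg htend
  rw [key]
  have hu0 : u 0 = 0 := by simp [hu_def]
  simp [hF_def, hu0, Real.zero_rpow (ne_of_gt hβ)]
end

section
/- For all parameters α > 0, λ > 0, c > 0, β > 0 and x > 0, the derivative of the OGE-G probability density function f vanishes at x if and only if x satisfies the mode equation: (c + λ e^{c x} - α λ e^{c x} · exp((λ/c)·(e^{c x} - 1)))·(1 - exp(-α·(exp((λ/c)·(e^{c x} - 1)) - 1))) + α λ (β - 1) e^{c x} · exp((λ/c)·(e^{c x} - 1)) · exp(-α·(exp((λ/c)·(e^{c x} - 1)) - 1)) = 0. -/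
/-- For `x > 0`, the derivative of the OGE-G pdf vanishes at `x` if and only if
`x` satisfies the mode equation (9). -/
theorem ogeG_mode_equation (α lam c β : ℝ)
    (hα : 0 < α) (hlam : 0 < lam) (hc : 0 < c) (hβ : 0 < β)
    (x : ℝ) (hx : 0 < x) :
    deriv (ogeG_pdf α lam c β) x = 0 ↔
      (c + lam * Real.exp (c * x) -
        α * lam * Real.exp (c * x) * Real.exp (lam / c * (Real.exp (c * x) - 1))) *
        (1 - Real.exp (-α * (Real.exp (lam / c * (Real.exp (c * x) - 1)) - 1))) +
      α * lam * (β - 1) * Real.exp (c * x) *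
        Real.exp (lam / c * (Real.exp (c * x) - 1)) *
        Real.exp (-α * (Real.exp (lam / c * (Real.exp (c * x) - 1)) - 1)) = 0 := by
  set A := Real.exp (c * x) with hAdef
  set B := Real.exp (lam / c * (A - 1)) with hBdef
  set C := Real.exp (-α * (B - 1)) with hCdef
  have hA1 : 1 < A := Real.one_lt_exp_iff.mpr (mul_pos hc hx)
  have hB1 : 1 < B := Real.one_lt_exp_iff.mpr (mul_pos (div_pos hlam hc) (by linarith))
  have hC1 : C < 1 := Real.exp_lt_one_iff.mpr (by nlinarith)
  have hC0 : 0 < C := Real.exp_pos _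
  have h1C : 0 < 1 - C := by linarith
  have hA0 : 0 < A := Real.exp_pos _
  have hB0 : 0 < B := Real.exp_pos _
  -- derivatives
  have h1 : HasDerivAt (fun y : ℝ => c * y) c x := by
    simpa using (hasDerivAt_id x).const_mul c
  have hA : HasDerivAt (fun y => Real.exp (c * y)) (A * c) x := h1.exp
  have hu : HasDerivAt (fun y => lam / c * (Real.exp (c * y) - 1))
      (lam / c * (A * c)) x := (hA.sub_const 1).const_mul _
  have hB : HasDerivAt (fun y => Real.exp (lam / c * (Real.exp (c * y) - 1)))
      (B * (lam / c * (A * c))) x := hu.exp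
  have hv : HasDerivAt (fun y => -α * (Real.exp (lam / c * (Real.exp (c * y) - 1)) - 1))
      (-α * (B * (lam / c * (A * c)))) x := (hB.sub_const 1).const_mul _
  have hC : HasDerivAt
      (fun y => Real.exp (-α * (Real.exp (lam / c * (Real.exp (c * y) - 1)) - 1)))
      (C * (-α * (B * (lam / c * (A * c))))) x := hv.exp
  have h1mC : HasDerivAt
      (fun y => 1 - Real.exp (-α * (Real.exp (lam / c * (Real.exp (c * y) - 1)) - 1)))
      (-(C * (-α * (B * (lam / c * (A * c)))))) x := hC.const_sub 1
  have hD : HasDerivAt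
      (fun y => (1 - Real.exp (-α * (Real.exp (lam / c * (Real.exp (c * y) - 1)) - 1))) ^ (β - 1))
      ((-(C * (-α * (B * (lam / c * (A * c)))))) * (β - 1) * (1 - C) ^ (β - 1 - 1)) x :=
    h1mC.rpow_const (Or.inl h1C.ne')
  have hf : HasDerivAt (ogeG_pdf α lam c β)
      (((α * β * lam * (A * c) * B + α * β * lam * A * (B * (lam / c * (A * c)))) * C
          + α * β * lam * A * B * (C * (-α * (B * (lam / c * (A * c)))))) * ((1 - C) ^ (β - 1))
        + α * β * lam * A * B * C *
          ((-(C * (-α * (B * (lam / c * (A * c)))))) * (β - 1) * (1 - C) ^ (β - 1 - 1))) x := by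
    have := (((hA.const_mul (α * β * lam)).mul hB).mul hC).mul hD
    convert this using 2
    · rfl
    · rfl
    · rfl
    · simp only [Pi.mul_apply, hAdef, hBdef, hCdef]
    · simp only [Pi.mul_apply, hAdef, hBdef, hCdef]
  rw [hf.deriv]
  set E := (1 - C) ^ (β - 2) with hEdef
  have hE0 : 0 < E := Real.rpow_pos_of_pos h1C _
  have hpow1 : (1 - C) ^ (β - 1) = E * (1 - C) := by
    rw [hEdef, show β - 1 = (β - 2) + 1 by ring, Real.rpow_add h1C, Real.rpow_one]
  have hpow2 : (1 - C) ^ (β - 1 - 1) = E := by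
    rw [hEdef]; congr 1; ring
  have hdc : lam / c * (A * c) = lam * A := by field_simp
  rw [hpow1, hpow2, hdc]
  have hfac : ((α * β * lam * (A * c) * B + α * β * lam * A * (B * (lam * A))) * C
        + α * β * lam * A * B * (C * (-α * (B * (lam * A))))) * (E * (1 - C))
      + α * β * lam * A * B * C * (-(C * (-α * (B * (lam * A)))) * (β - 1) * E)
      = (α * β * lam * A * B * C * E) *
        ((c + lam * A - α * lam * A * B) * (1 - C) + α * lam * (β - 1) * A * B * C) := by
    ring
  rw [hfac]
  have hpos : α * β * lam * A * B * C * E ≠ 0 := by positivity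
  constructor
  · intro h
    rcases mul_eq_zero.mp h with h | h
    · exact absurd h hpos
    · exact h
  · intro h
    rw [h, mul_zero]
end

section
/- For all parameters α > 0, λ > 0, c > 0, β > 0 and every natural number r, the r-th moment of the OGE-G distribution is finite, i.e., the integral ∫₀^∞ x^r · f(x; α, λ, c, β) dx converges. -/
set_option maxHeartbeats 1000000

open MeasureTheory Real Set

/-- Polynomial growth is beaten by exponential: explicit-constant version. -/
lemma oge_aux_pow_le_exp (n : ℕ) {a : ℝ} (ha : 0 < a) :
    ∃ C : ℝ, 0 < C ∧ ∀ t : ℝ, 0 ≤ t → (1 + t) ^ n ≤ C * Real.exp (a * t) := by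
  set ε : ℝ := min 1 (a / (n + 1)) with hεdef
  have hε0 : 0 < ε := lt_min one_pos (by positivity)
  have hε1 : ε ≤ 1 := min_le_left _ _
  have hna : (n : ℝ) * ε ≤ a := by
    have h1 : ε ≤ a / (n + 1) := min_le_right _ _
    have h2 : (n : ℝ) * ε ≤ (n : ℝ) * (a / (n + 1)) :=
      mul_le_mul_of_nonneg_left h1 (Nat.cast_nonneg n)
    have h3 : (n : ℝ) * (a / (n + 1)) ≤ a := by
      rw [mul_div_assoc', div_le_iff₀ (by positivity : (0:ℝ) < (n:ℝ) + 1)]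
      nlinarith [Nat.cast_nonneg (α := ℝ) n]
    linarith
  refine ⟨(1 / ε) ^ n, by positivity, fun t ht => ?_⟩
  have key : 1 + t ≤ (1 / ε) * (1 + ε * t) := by
    have h4 : (1 / ε) * (1 + ε * t) - (1 + t) = (1 - ε) / ε := by field_simp; ring
    nlinarith [div_nonneg (by linarith : (0:ℝ) ≤ 1 - ε) hε0.le]
  calc (1 + t) ^ n ≤ ((1 / ε) * (1 + ε * t)) ^ n := by
        apply pow_le_pow_left₀ (by linarith) key
    _ = (1 / ε) ^ n * (1 + ε * t) ^ n := mul_pow _ _ _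
    _ ≤ (1 / ε) ^ n * (Real.exp (ε * t)) ^ n := by
        apply mul_le_mul_of_nonneg_left _ (by positivity)
        apply pow_le_pow_left₀ (by positivity)
        linarith [Real.add_one_le_exp (ε * t)]
    _ = (1 / ε) ^ n * Real.exp ((n : ℝ) * (ε * t)) := by
        rw [← Real.exp_nat_mul]
    _ ≤ (1 / ε) ^ n * Real.exp (a * t) := by
        apply mul_le_mul_of_nonneg_left _ (by positivity)
        apply Real.exp_le_exp.mpr
        calc (n : ℝ) * (ε * t) = ((n : ℝ) * ε) * t := by ring
          _ ≤ a * t := mul_le_mul_of_nonneg_right hna ht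

/-- For every natural number `r`, the `r`-th moment of the OGE-G distribution is
finite: `x ^ r * f(x)` is integrable on `(0, ∞)`. -/
theorem ogeG_moment_finite (α lam c β : ℝ)
    (hα : 0 < α) (hlam : 0 < lam) (hc : 0 < c) (hβ : 0 < β) (r : ℕ) :
    MeasureTheory.IntegrableOn
      (fun x : ℝ => x ^ r * ogeG_pdf α lam c β x) (Set.Ioi 0) := by
  obtain ⟨C, hC0, hCb⟩ := oge_aux_pow_le_exp (r + 3) (half_pos hα)
  set δ : ℝ := α * lam / 2 with hδdef
  have hδ0 : 0 < δ := by positivity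
  set L : ℝ := max 1 (1 / lam) with hLdef
  set M : ℝ := max 1 (c / lam) with hMdef
  set A : ℝ := max 1 α with hAdef
  set G : ℝ := max 1 ((α * lam) ^ (β - 1)) with hGdef
  have hL1 : (1:ℝ) ≤ L := le_max_left _ _
  have hM1 : (1:ℝ) ≤ M := le_max_left _ _
  have hA1 : (1:ℝ) ≤ A := le_max_left _ _
  have hG1 : (1:ℝ) ≤ G := le_max_left _ _
  set K : ℝ := α * β * lam * L ^ r * M * G * A * C with hKdef
  have hK0 : 0 < K := by positivity
  -- the dominating function
  have hg : Integrable (fun x : ℝ => K * ((1 + x ^ (β - 1)) * Real.exp (-δ * x)))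
      (volume.restrict (Ioi 0)) := by
    have h1 : IntegrableOn (fun x : ℝ => Real.exp (-δ * x)) (Ioi 0) :=
      exp_neg_integrableOn_Ioi 0 hδ0
    have h2 : IntegrableOn (fun x : ℝ => x ^ (β - 1) * Real.exp (-δ * x)) (Ioi 0) := by
      have := integrableOn_rpow_mul_exp_neg_mul_rpow
        (by linarith : (-1:ℝ) < β - 1) (zero_lt_one : (0:ℝ) < 1) hδ0
      simpa [Real.rpow_one] using this
    have h3 : (fun x : ℝ => K * ((1 + x ^ (β - 1)) * Real.exp (-δ * x)))
        = fun x : ℝ => K * (Real.exp (-δ * x) + x ^ (β - 1) * Real.exp (-δ * x)) := by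
      funext x; ring
    rw [h3]
    exact (h1.add h2).const_mul K
  apply Integrable.mono' hg
  · -- measurability
    apply ContinuousOn.aestronglyMeasurable _ measurableSet_Ioi
    intro x hx
    have hx0 : (0:ℝ) < x := hx
    apply ContinuousWithinAt.mul
    · exact (continuous_pow r).continuousWithinAt
    · unfold ogeG_pdf
      apply ContinuousWithinAt.mul
      · exact (by fun_prop : Continuous fun y : ℝ =>
          α * β * lam * Real.exp (c * y) * Real.exp (lam / c * (Real.exp (c * y) - 1)) *
            Real.exp (-α * (Real.exp (lam / c * (Real.exp (c * y) - 1)) - 1))).continuousWithinAt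
      · set u : ℝ := lam / c * (Real.exp (c * x) - 1) with hu
        have hu0 : 0 < u := by
          have := Real.add_one_le_exp (c * x)
          have hcx : 0 < c * x := by positivity
          have : 0 < Real.exp (c * x) - 1 := by linarith
          positivity
        have hv0 : 0 < Real.exp u - 1 := by
          have := Real.add_one_le_exp u; linarith [Real.add_one_le_exp u]
        have hB0 : 0 < 1 - Real.exp (-α * (Real.exp u - 1)) := by
          have : -α * (Real.exp u - 1) < 0 := by nlinarith
          have := Real.exp_lt_one_iff.mpr this
          linarith
        apply ContinuousAt.continuousWithinAt
        have hcont : ContinuousAt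
            (fun y : ℝ => 1 - Real.exp (-α * (Real.exp (lam / c * (Real.exp (c * y) - 1)) - 1))) x := by
          fun_prop
        have : ContinuousAt ((fun b : ℝ => b ^ (β - 1)) ∘
            (fun y : ℝ => 1 - Real.exp (-α * (Real.exp (lam / c * (Real.exp (c * y) - 1)) - 1)))) x :=
          ContinuousAt.comp (Real.continuousAt_rpow_const _ _ (Or.inl (ne_of_gt hB0))) hcont
        exact this
  · -- the pointwise bound, a.e. on Ioi 0
    rw [ae_restrict_iff' measurableSet_Ioi]
    apply Filter.Eventually.of_forall
    intro x hx
    have hx0 : (0:ℝ) < x := hx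
    simp only [ogeG_pdf]
    set u : ℝ := lam / c * (Real.exp (c * x) - 1) with hu_def
    set v : ℝ := Real.exp u - 1 with hv_def
    -- basic facts
    have hux : lam * x ≤ u := by
      have h1 : c * x ≤ Real.exp (c * x) - 1 := by linarith [Real.add_one_le_exp (c * x)]
      calc lam * x = lam / c * (c * x) := by field_simp
        _ ≤ u := by
            rw [hu_def]
            exact mul_le_mul_of_nonneg_left h1 (by positivity)
    have hu0 : 0 < u := lt_of_lt_of_le (by positivity) hux
    have huv : u ≤ v := by
      rw [hv_def]; linarith [Real.add_one_le_exp u]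
    have hv0 : 0 < v := lt_of_lt_of_le hu0 huv
    have hvx : lam * x ≤ v := hux.trans huv
    have hEu : Real.exp u = 1 + v := by rw [hv_def]; ring
    have hEcx : Real.exp (c * x) ≤ M * (1 + v) := by
      have h1 : c / lam * u = Real.exp (c * x) - 1 := by
        rw [hu_def]; field_simp
      have h2 : c / lam * u ≤ c / lam * v := mul_le_mul_of_nonneg_left huv (by positivity)
      have h3 : c / lam ≤ M := by rw [hMdef]; exact le_max_right _ _
      have h4 : c / lam * v ≤ M * v := mul_le_mul_of_nonneg_right h3 hv0.le
      nlinarith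
    set B : ℝ := 1 - Real.exp (-α * v) with hB_def
    have hev1 : Real.exp (-α * v) < 1 := by
      apply Real.exp_lt_one_iff.mpr; nlinarith
    have hB0 : 0 ≤ B := by rw [hB_def]; linarith
    have hBpos : 0 < B := by rw [hB_def]; linarith
    have hB1 : B ≤ 1 := by rw [hB_def]; linarith [Real.exp_pos (-α * v)]
    -- lower bound on B
    have hBlow : α * v / (1 + α * v) ≤ B := by
      have h2 : α * v + 1 ≤ Real.exp (α * v) := Real.add_one_le_exp _
      have h4 : (1 + α * v) * Real.exp (-α * v) ≤ 1 := by
        have h5 : (1 + α * v) * Real.exp (-α * v) ≤ Real.exp (α * v) * Real.exp (-α * v) :=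
          mul_le_mul_of_nonneg_right (by linarith) (Real.exp_pos _).le
        rwa [← Real.exp_add, show α * v + -α * v = 0 by ring, Real.exp_zero] at h5
      have h6 : Real.exp (-α * v) ≤ 1 / (1 + α * v) := by
        rw [le_div_iff₀ (by positivity)]
        nlinarith
      have h7 : α * v / (1 + α * v) = 1 - 1 / (1 + α * v) := by field_simp; ring
      rw [hB_def, h7]; linarith
    clear_value u v B
    -- bound on the rpow factor
    have hBp_nonneg : (0:ℝ) ≤ B ^ (β - 1) := Real.rpow_nonneg hB0 _
    have hxp_nonneg : (0:ℝ) ≤ x ^ (β - 1) := Real.rpow_nonneg hx0.le _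
    have hB2 : B ^ (β - 1) ≤ G * A * ((1 + x ^ (β - 1)) * (1 + v)) := by
      rcases le_or_gt 1 β with hb1 | hb1
      · have h1 : B ^ (β - 1) ≤ 1 := Real.rpow_le_one hB0 hB1 (by linarith)
        have h2 : (1:ℝ) ≤ (1 + x ^ (β - 1)) * (1 + v) := by nlinarith
        have h3 : (1:ℝ) ≤ G * A := le_trans hA1 (le_mul_of_one_le_left (by linarith) hG1)
        have h4 : (1:ℝ) * 1 ≤ G * A * ((1 + x ^ (β - 1)) * (1 + v)) :=
          mul_le_mul h3 h2 zero_le_one (by linarith)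
        nlinarith
      · -- β < 1 : exponent β - 1 < 0
        have hbm : β - 1 ≤ 0 := by linarith
        have hq0 : 0 < α * v / (1 + α * v) := by positivity
        have step1 : B ^ (β - 1) ≤ (α * v / (1 + α * v)) ^ (β - 1) :=
          Real.rpow_le_rpow_of_nonpos hq0 hBlow hbm
        have step2 : (α * v / (1 + α * v)) ^ (β - 1)
            = (α * v) ^ (β - 1) * ((1 + α * v) ^ (β - 1))⁻¹ := by
          rw [Real.div_rpow (by positivity) (by positivity)]
          rw [div_eq_mul_inv]
        have step3 : ((1 + α * v) ^ (β - 1))⁻¹ = (1 + α * v) ^ (1 - β) := by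
          rw [← Real.rpow_neg (by positivity)]
          norm_num
        have step4 : (1 + α * v) ^ (1 - β) ≤ 1 + α * v := by
          calc (1 + α * v) ^ (1 - β) ≤ (1 + α * v) ^ (1:ℝ) :=
                Real.rpow_le_rpow_of_exponent_le (by nlinarith) (by linarith)
            _ = 1 + α * v := Real.rpow_one _
        have step5 : (α * v) ^ (β - 1) ≤ (α * (lam * x)) ^ (β - 1) := by
          apply Real.rpow_le_rpow_of_nonpos (by positivity) _ hbm
          exact mul_le_mul_of_nonneg_left hvx hα.le
        have step6 : (α * (lam * x)) ^ (β - 1) = (α * lam) ^ (β - 1) * x ^ (β - 1) := by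
          rw [show α * (lam * x) = (α * lam) * x by ring,
            Real.mul_rpow (by positivity) hx0.le]
        have step7 : (α * lam) ^ (β - 1) ≤ G := by rw [hGdef]; exact le_max_right _ _
        have step8 : 1 + α * v ≤ A * (1 + v) := by
          have : α ≤ A := by rw [hAdef]; exact le_max_right _ _
          nlinarith
        have h9 : (α * v) ^ (β - 1) ≤ G * x ^ (β - 1) := by
          calc (α * v) ^ (β - 1) ≤ (α * lam) ^ (β - 1) * x ^ (β - 1) := by
                rw [← step6]; exact step5
            _ ≤ G * x ^ (β - 1) := mul_le_mul_of_nonneg_right step7 hxp_nonneg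
        calc B ^ (β - 1) ≤ (α * v / (1 + α * v)) ^ (β - 1) := step1
          _ = (α * v) ^ (β - 1) * (1 + α * v) ^ (1 - β) := by rw [step2, step3]
          _ ≤ (G * x ^ (β - 1)) * (A * (1 + v)) := by
              apply mul_le_mul h9 (step4.trans step8)
              · positivity
              · positivity
          _ = G * A * (x ^ (β - 1) * (1 + v)) := by ring
          _ ≤ G * A * ((1 + x ^ (β - 1)) * (1 + v)) := by
              apply mul_le_mul_of_nonneg_left _ (by nlinarith : (0:ℝ) ≤ G * A)
              nlinarith
    -- bound on x ^ r
    have hxr : x ^ r ≤ L ^ r * (1 + v) ^ r := by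
      have h1 : x ≤ L * (1 + v) := by
        have h2 : 1 / lam ≤ L := by rw [hLdef]; exact le_max_right _ _
        have h3 : x ≤ v / lam := by
          rw [le_div_iff₀ hlam]; linarith [hvx]
        have h4 : v / lam = v * (1 / lam) := by ring
        nlinarith [mul_le_mul_of_nonneg_left h2 hv0.le]
      calc x ^ r ≤ (L * (1 + v)) ^ r := pow_le_pow_left₀ hx0.le h1 r
        _ = L ^ r * (1 + v) ^ r := mul_pow _ _ _
    -- now assemble
    rw [Real.norm_eq_abs, abs_of_nonneg]
    swap
    · apply mul_nonneg (pow_nonneg hx0.le r)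
      apply mul_nonneg _ hBp_nonneg
      positivity
    rw [hEu]
    calc x ^ r * (α * β * lam * Real.exp (c * x) * (1 + v) * Real.exp (-α * v) * B ^ (β - 1))
        ≤ (L ^ r * (1 + v) ^ r) *
            (α * β * lam * (M * (1 + v)) * (1 + v) * Real.exp (-α * v) *
              (G * A * ((1 + x ^ (β - 1)) * (1 + v)))) := by
          apply mul_le_mul hxr _ (by positivity) (by positivity)
          apply mul_le_mul _ hB2 hBp_nonneg (by positivity)
          apply mul_le_mul_of_nonneg_right _ (Real.exp_pos _).le
          apply mul_le_mul_of_nonneg_right _ (by positivity)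
          exact mul_le_mul_of_nonneg_left hEcx (by positivity)
      _ = (α * β * lam * L ^ r * M * G * A) *
            ((1 + x ^ (β - 1)) * ((1 + v) ^ (r + 3) * Real.exp (-α * v))) := by
          ring
      _ ≤ (α * β * lam * L ^ r * M * G * A) *
            ((1 + x ^ (β - 1)) * ((C * Real.exp (α / 2 * v)) * Real.exp (-α * v))) := by
          apply mul_le_mul_of_nonneg_left _ (by positivity)
          apply mul_le_mul_of_nonneg_left _ (by positivity)
          exact mul_le_mul_of_nonneg_right (hCb v hv0.le) (Real.exp_pos _).le
      _ = (α * β * lam * L ^ r * M * G * A) *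
            ((1 + x ^ (β - 1)) * (C * (Real.exp (α / 2 * v) * Real.exp (-α * v)))) := by ring
      _ = K * ((1 + x ^ (β - 1)) * Real.exp (-(α / 2) * v)) := by
          rw [← Real.exp_add, show α / 2 * v + -α * v = -(α / 2) * v by ring, hKdef]
          ring
      _ ≤ K * ((1 + x ^ (β - 1)) * Real.exp (-δ * x)) := by
          apply mul_le_mul_of_nonneg_left _ hK0.le
          apply mul_le_mul_of_nonneg_left _ (by positivity)
          apply Real.exp_le_exp.mpr
          rw [hδdef]
          nlinarith
end

section
/- For all parameters α > 0, λ > 0, c > 0, β > 0 and every natural number r, the r-th moment of the OGE-G distribution admits the series representation ∫₀^∞ x^r f(x; α, λ, c, β) dx = Σ_{i=0}^∞ α β λ (-1)^i C(β-1, i) · ∫₀^∞ x^r e^{c x} · exp((λ/c)·(e^{c x} - 1)) · exp(-α(i+1)·(exp((λ/c)·(e^{c x} - 1)) - 1)) dx, where the series on the right converges and each integral on the right is finite. -/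
/-- The generalized binomial coefficient `C(s, i) = s(s-1)⋯(s-i+1)/i!`. -/
noncomputable def gchoose (s : ℝ) (i : ℕ) : ℝ :=
  (∏ k ∈ Finset.range i, (s - k)) / (Nat.factorial i)

open Real Finset

noncomputable def bcoef (s : ℝ) (i : ℕ) : ℝ := (-1)^i * gchoose s i

lemma gchoose_zero (s : ℝ) : gchoose s 0 = 1 := by simp [gchoose]

lemma gchoose_succ (s : ℝ) (i : ℕ) :
    gchoose s (i+1) = gchoose s i * ((s - i)/(i+1)) := by
  rw [gchoose, gchoose, Finset.prod_range_succ, div_mul_div_comm, Nat.factorial_succ]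
  push_cast
  ring

lemma bcoef_zero (s : ℝ) : bcoef s 0 = 1 := by simp [bcoef, gchoose_zero]

lemma bcoef_succ (s : ℝ) (i : ℕ) :
    bcoef s (i+1) = bcoef s i * (((i:ℝ) - s)/(i+1)) := by
  simp only [bcoef, gchoose_succ, pow_succ]
  ring

lemma bcoef_ratio_nonneg {s : ℝ} {i : ℕ} (hi : ⌈s⌉₊ ≤ i) :
    0 ≤ ((i:ℝ) - s)/((i:ℝ)+1) := by
  apply div_nonneg
  · have : s ≤ (⌈s⌉₊ : ℝ) := Nat.le_ceil s
    have : (⌈s⌉₊:ℝ) ≤ i := by exact_mod_cast hi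
    linarith [Nat.le_ceil s]
  · positivity

lemma bcoef_ratio_le_one {s : ℝ} (hs : -1 ≤ s) {i : ℕ} (hi : ⌈s⌉₊ ≤ i) :
    ((i:ℝ) - s)/((i:ℝ)+1) ≤ 1 := by
  rw [div_le_one (by positivity)]
  linarith

lemma bcoef_bdd {s : ℝ} (hs : -1 ≤ s) :
    ∃ M : ℝ, 0 < M ∧ ∀ i, |bcoef s i| ≤ M := by
  set N0 := ⌈s⌉₊ with hN0
  refine ⟨(∑ j ∈ Finset.range (N0+1), |bcoef s j|) + 1, by positivity, ?_⟩
  have key : ∀ k, |bcoef s (N0 + k)| ≤ |bcoef s N0| := by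
    intro k
    induction k with
    | zero => simp
    | succ k ih =>
      have h1 : N0 ≤ N0 + k := Nat.le_add_right _ _
      calc |bcoef s (N0 + (k+1))| = |bcoef s (N0+k)| * |(((N0+k:ℕ):ℝ) - s)/(((N0+k:ℕ):ℝ)+1)| := by
            rw [show N0 + (k+1) = (N0+k)+1 by ring, bcoef_succ, abs_mul]
        _ ≤ |bcoef s (N0+k)| * 1 := by
            apply mul_le_mul_of_nonneg_left _ (abs_nonneg _)
            rw [abs_of_nonneg (bcoef_ratio_nonneg h1)]
            exact bcoef_ratio_le_one hs h1
        _ ≤ |bcoef s N0| := by rw [mul_one]; exact ih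
  intro i
  rcases le_or_gt i N0 with h | h
  · calc |bcoef s i| ≤ ∑ j ∈ Finset.range (N0+1), |bcoef s j| :=
        Finset.single_le_sum (f := fun j => |bcoef s j|) (fun j _ => abs_nonneg _) (Finset.mem_range.2 (Nat.lt_succ_of_le h))
      _ ≤ _ := by linarith
  · obtain ⟨k, rfl⟩ := Nat.exists_eq_add_of_le h.le
    calc |bcoef s (N0 + k)| ≤ |bcoef s N0| := key k
      _ ≤ ∑ j ∈ Finset.range (N0+1), |bcoef s j| :=
        Finset.single_le_sum (f := fun j => |bcoef s j|) (fun j _ => abs_nonneg _) (Finset.mem_range.2 (Nat.lt_succ_self _))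
      _ ≤ _ := by linarith

lemma bcoef_summable {s : ℝ} (hs : -1 ≤ s) {u : ℝ} (hu : |u| < 1) :
    Summable fun i => bcoef s i * u ^ i := by
  obtain ⟨M, hM0, hM⟩ := bcoef_bdd hs
  apply Summable.of_norm_bounded (g := fun i => M * |u| ^ i)
    ((summable_geometric_of_lt_one (abs_nonneg u) hu).mul_left M)
  intro i
  rw [norm_mul, norm_pow, Real.norm_eq_abs, Real.norm_eq_abs]
  exact mul_le_mul_of_nonneg_right (hM i) (by positivity)

lemma aux_summable_geom {q : ℝ} (hq0 : 0 ≤ q) (hq : q < 1) :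
    Summable fun i : ℕ => (i:ℝ) * q ^ (i-1) := by
  rw [← summable_nat_add_iff 1]
  have h1 : Summable fun i : ℕ => ((i:ℝ))^1 * q ^ i :=
    summable_pow_mul_geometric_of_norm_lt_one 1 (by rwa [Real.norm_eq_abs, abs_of_nonneg hq0])
  have h2 : Summable fun i : ℕ => q ^ i := summable_geometric_of_lt_one hq0 hq
  have := (h1.add h2)
  apply this.congr
  intro i
  push_cast
  simp [pow_one]
  ring

lemma bcoef_deriv_summable {s : ℝ} (hs : -1 ≤ s) {u : ℝ} (hu : |u| < 1) :
    Summable fun i => bcoef s i * ((i:ℝ) * u ^ (i-1)) := by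
  obtain ⟨M, hM0, hM⟩ := bcoef_bdd hs
  apply Summable.of_norm_bounded (g := fun i : ℕ => M * ((i:ℝ) * |u| ^ (i-1)))
    ((aux_summable_geom (abs_nonneg u) hu).mul_left M)
  intro i
  rw [norm_mul, Real.norm_eq_abs, Real.norm_eq_abs, abs_mul, abs_pow,
    Nat.abs_cast]
  exact mul_le_mul (hM i) le_rfl (by positivity) hM0.le

lemma bcoef_hasDerivAt {s : ℝ} (hs : -1 ≤ s) {y : ℝ} (hy : |y| < 1) :
    HasDerivAt (fun z => ∑' i, bcoef s i * z ^ i)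
      (∑' i, bcoef s i * ((i:ℝ) * y ^ (i-1))) y := by
  set ρ := (1 + |y|)/2 with hρdef
  have hy0 : 0 ≤ |y| := abs_nonneg y
  have hρ0 : 0 < ρ := by rw [hρdef]; linarith
  have hρ1 : ρ < 1 := by rw [hρdef]; linarith
  have hyρ : |y| < ρ := by rw [hρdef]; linarith
  obtain ⟨M, hM0, hM⟩ := bcoef_bdd hs
  apply hasDerivAt_tsum_of_isPreconnected
    (u := fun i : ℕ => M * ((i:ℝ) * ρ ^ (i-1)))
    (t := Metric.ball (0:ℝ) ρ)
    (g' := fun i z => bcoef s i * ((i:ℝ) * z ^ (i-1)))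
    (y₀ := 0)
    ((aux_summable_geom hρ0.le hρ1).mul_left M)
    Metric.isOpen_ball
    (convex_ball (0:ℝ) ρ).isPreconnected
  · intro n z _
    exact (hasDerivAt_pow n z).const_mul (bcoef s n)
  · intro n z hz
    rw [Metric.mem_ball, Real.dist_eq, sub_zero] at hz
    rw [Real.norm_eq_abs, abs_mul, abs_mul, abs_pow, Nat.abs_cast]
    refine mul_le_mul (hM n) (mul_le_mul le_rfl (pow_le_pow_left₀ (abs_nonneg z) hz.le _)
      (by positivity) (Nat.cast_nonneg n)) (by positivity) hM0.le
  · rw [Metric.mem_ball, Real.dist_eq, sub_zero, abs_zero]; exact hρ0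
  · exact bcoef_summable hs (by rw [abs_zero]; exact one_pos)
  · rw [Metric.mem_ball, Real.dist_eq, sub_zero]; exact hyρ

lemma hasSum_ext {f g : ℕ → ℝ} {a : ℝ} (h : HasSum f a) (he : ∀ i, f i = g i) :
    HasSum g a := (funext he : f = g) ▸ h

lemma bcoef_ode {s : ℝ} (hs : -1 ≤ s) {y : ℝ} (hy : |y| < 1) :
    (1 - y) * (∑' i, bcoef s i * ((i:ℝ) * y ^ (i-1)))
      + s * (∑' i, bcoef s i * y ^ i) = 0 := by
  set D := ∑' i, bcoef s i * ((i:ℝ) * y ^ (i-1)) with hD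
  set h := ∑' i, bcoef s i * y ^ i with hh
  have HD : HasSum (fun i => bcoef s i * ((i:ℝ) * y ^ (i-1))) D :=
    (bcoef_deriv_summable hs hy).hasSum
  have H0 : HasSum (fun i => bcoef s i * y ^ i) h := (bcoef_summable hs hy).hasSum
  have Hshift : HasSum (fun i : ℕ => bcoef s (i+1) * (((i:ℝ)+1) * y ^ i)) D := by
    have H := (hasSum_nat_add_iff
      (f := fun i => bcoef s i * ((i:ℝ) * y ^ (i-1))) 1).2 (by simpa using HD)
    apply hasSum_ext H
    intro i
    push_cast
    ring_nf
  have Hshift2 : HasSum (fun i : ℕ => bcoef s i * (((i:ℝ) - s) * y ^ i)) D := by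
    apply hasSum_ext Hshift
    intro i
    rw [bcoef_succ]
    have hi0 : ((i:ℝ)+1) ≠ 0 := by positivity
    field_simp
  have Hmul : HasSum (fun i : ℕ => bcoef s i * ((i:ℝ) * y ^ i)) (D * y) := by
    apply hasSum_ext (HD.mul_right y)
    intro i
    rcases i with _ | i
    · simp
    · rw [show (i+1) - 1 = i from rfl, pow_succ]
      ring
  have Hcomb : HasSum (fun i : ℕ => bcoef s i * (((i:ℝ) - s) * y ^ i)) (D * y - s * h) := by
    apply hasSum_ext (Hmul.sub (H0.mul_left s))
    intro i
    ring
  have := Hshift2.unique Hcomb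
  nlinarith [this]

lemma bcoef_hasSum {s : ℝ} (hs : -1 ≤ s) {u : ℝ} (hu0 : 0 ≤ u) (hu : u < 1) :
    HasSum (fun i => bcoef s i * u ^ i) ((1 - u) ^ s) := by
  have hu' : |u| < 1 := by rw [abs_of_nonneg hu0]; exact hu
  set h : ℝ → ℝ := fun y => ∑' i, bcoef s i * y ^ i with hhdef
  set φ : ℝ → ℝ := fun y => h y * (1 - y) ^ (-s) with hφdef
  have hφderiv : ∀ y ∈ Set.Ioo (-1:ℝ) 1, HasDerivAt φ 0 y := by
    intro y hy
    have hy1 : |y| < 1 := abs_lt.2 ⟨hy.1, hy.2⟩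
    have h1y : (0:ℝ) < 1 - y := by linarith [hy.2]
    have hrpow : HasDerivAt (fun z : ℝ => (1 - z) ^ (-s)) (s * (1-y) ^ (-s-1)) y := by
      have base : HasDerivAt (fun z : ℝ => 1 - z) (-1) y := (hasDerivAt_id y).const_sub 1
      have hr : HasDerivAt (fun t : ℝ => t ^ (-s)) ((-s) * (1-y) ^ (-s-1)) (1-y) :=
        Real.hasDerivAt_rpow_const (Or.inl h1y.ne')
      have := hr.comp y base
      refine this.congr_deriv ?_
      ring
    have hD := bcoef_hasDerivAt hs hy1
    have hmul := hD.mul hrpow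
    refine hmul.congr_deriv ?_
    have hfac : (1-y) ^ (-s) = (1-y) ^ (-s-1) * (1-y) := by
      rw [← Real.rpow_add_one h1y.ne']
      ring_nf
    have hode := bcoef_ode hs hy1
    rw [hfac]
    linear_combination ((1-y) ^ (-s-1)) * hode
  have hconst : φ u = φ 0 := by
    have hconv : Convex ℝ (Set.Ioo (-1:ℝ) 1) := convex_Ioo _ _
    have hdiff : DifferentiableOn ℝ φ (Set.Ioo (-1:ℝ) 1) := fun y hy =>
      (hφderiv y hy).differentiableAt.differentiableWithinAt
    have humem : u ∈ Set.Ioo (-1:ℝ) 1 := ⟨by linarith, hu⟩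
    have h0mem : (0:ℝ) ∈ Set.Ioo (-1:ℝ) 1 := ⟨by norm_num, by norm_num⟩
    apply hconv.is_const_of_fderivWithin_eq_zero hdiff ?_ humem h0mem
    intro y hy
    rw [fderivWithin_of_isOpen isOpen_Ioo hy, (hφderiv y hy).hasFDerivAt.fderiv]
    ext z
    simp
  have h0val : h 0 = 1 := by
    show (∑' i, bcoef s i * (0:ℝ) ^ i) = 1
    rw [tsum_eq_single 0 (by intro i hi; simp [zero_pow hi])]
    simp [bcoef_zero]
  have h1u : (0:ℝ) < 1 - u := by linarith
  have hφu : h u * (1 - u) ^ (-s) = 1 := by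
    have : φ u = 1 := by
      rw [hconst, hφdef]
      simp only [sub_zero, Real.one_rpow, mul_one, h0val]
    simpa [hφdef] using this
  have hhu : h u = (1 - u) ^ s := by
    have hne : (1 - u) ^ (-s) ≠ 0 := (Real.rpow_pos_of_pos h1u _).ne'
    have := congrArg (fun t => t * (1 - u) ^ s) hφu
    simp only [one_mul] at this
    rwa [mul_assoc, ← Real.rpow_add h1u, neg_add_cancel, Real.rpow_zero, mul_one] at this
  have := (bcoef_summable hs hu').hasSum
  rwa [show ∑' i, bcoef s i * u ^ i = h u from rfl, hhu] at this

lemma bcoef_sign {s : ℝ} :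
    (∀ i, ⌈s⌉₊ ≤ i → 0 ≤ bcoef s i) ∨ (∀ i, ⌈s⌉₊ ≤ i → bcoef s i ≤ 0) := by
  set N0 := ⌈s⌉₊ with hN0
  have step : ∀ k, (0 ≤ bcoef s N0 → 0 ≤ bcoef s (N0 + k)) ∧
      (bcoef s N0 ≤ 0 → bcoef s (N0 + k) ≤ 0) := by
    intro k
    induction k with
    | zero => exact ⟨fun h => by simpa using h, fun h => by simpa using h⟩
    | succ k ih =>
      have hr := bcoef_ratio_nonneg (s := s) (i := N0 + k) (Nat.le_add_right _ _)
      constructor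
      · intro h
        rw [show N0 + (k+1) = (N0+k)+1 by ring, bcoef_succ]
        exact mul_nonneg (ih.1 h) hr
      · intro h
        rw [show N0 + (k+1) = (N0+k)+1 by ring, bcoef_succ]
        exact mul_nonpos_of_nonpos_of_nonneg (ih.2 h) hr
  rcases le_or_gt 0 (bcoef s N0) with h | h
  · left; intro i hi
    obtain ⟨k, rfl⟩ := Nat.exists_eq_add_of_le hi
    exact (step k).1 h
  · right; intro i hi
    obtain ⟨k, rfl⟩ := Nat.exists_eq_add_of_le hi
    exact (step k).2 h.le

lemma bcoef_partial_bound {s : ℝ} (hs : -1 ≤ s) :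
    ∃ D : ℝ, 0 ≤ D ∧ ∀ u : ℝ, 0 ≤ u → u < 1 → ∀ N,
      |∑ i ∈ Finset.range N, bcoef s i * u ^ i| ≤ (1 - u) ^ s + D := by
  set N0 := ⌈s⌉₊ with hN0
  set D0 : ℝ := ∑ j ∈ Finset.range N0, |bcoef s j| with hD0
  have hD0nn : 0 ≤ D0 := Finset.sum_nonneg fun j _ => abs_nonneg _
  refine ⟨2 * D0, by linarith, ?_⟩
  intro u hu0 hu1 N
  have hL : HasSum (fun i => bcoef s i * u ^ i) ((1-u) ^ s) := bcoef_hasSum hs hu0 hu1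
  have hLpos : 0 ≤ (1-u) ^ s := (Real.rpow_pos_of_pos (by linarith) s).le
  have habs0 : ∀ (m : ℕ), |∑ i ∈ Finset.range m, bcoef s i * u ^ i| ≤
      ∑ i ∈ Finset.range m, |bcoef s i * u ^ i| := fun m => Finset.abs_sum_le_sum_abs _ _
  have hterm_le : ∀ i, |bcoef s i * u ^ i| ≤ |bcoef s i| := by
    intro i
    rw [abs_mul]
    calc |bcoef s i| * |u ^ i| ≤ |bcoef s i| * 1 := by
          apply mul_le_mul_of_nonneg_left _ (abs_nonneg _)
          rw [abs_pow, abs_of_nonneg hu0]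
          exact pow_le_one₀ hu0 hu1.le
      _ = |bcoef s i| := mul_one _
  rcases le_or_gt N N0 with hN | hN
  · calc |∑ i ∈ Finset.range N, bcoef s i * u ^ i| ≤ ∑ i ∈ Finset.range N, |bcoef s i * u ^ i| := habs0 N
      _ ≤ ∑ i ∈ Finset.range N, |bcoef s i| := Finset.sum_le_sum fun i _ => hterm_le i
      _ ≤ D0 := Finset.sum_le_sum_of_subset_of_nonneg
          (Finset.range_subset_range.2 hN) (fun j _ _ => abs_nonneg _)
      _ ≤ (1-u) ^ s + 2 * D0 := by linarith
  · -- N > N0 : split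
    set S0 := ∑ i ∈ Finset.range N0, bcoef s i * u ^ i with hS0
    have hS0le : |S0| ≤ D0 := by
      calc |S0| ≤ ∑ i ∈ Finset.range N0, |bcoef s i * u ^ i| := habs0 N0
        _ ≤ D0 := Finset.sum_le_sum fun i _ => hterm_le i
    set T := ∑ j ∈ Finset.range (N - N0), bcoef s (N0 + j) * u ^ (N0 + j) with hT
    have hsplit : ∑ i ∈ Finset.range N, bcoef s i * u ^ i = S0 + T := by
      rw [← Finset.sum_range_add_sum_Ico _ hN.le, Finset.sum_Ico_eq_sum_range]
    have htail : HasSum (fun j => bcoef s (N0 + j) * u ^ (N0 + j)) ((1-u) ^ s - S0) := by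
      have := (hasSum_nat_add_iff (f := fun i => bcoef s i * u ^ i) N0).2
        (by rw [← hS0, sub_add_cancel]; exact hL)
      exact hasSum_ext this fun j => by rw [add_comm j N0]
    rw [hsplit]
    rcases bcoef_sign (s := s) with hsgn | hsgn
    · have hTnn : 0 ≤ T := Finset.sum_nonneg fun j _ =>
        mul_nonneg (hsgn _ (Nat.le_add_right _ _)) (by positivity)
      have hTle : T ≤ (1-u) ^ s - S0 :=
        sum_le_hasSum _ (fun j _ => mul_nonneg (hsgn _ (Nat.le_add_right _ _)) (by positivity)) htail
      calc |S0 + T| ≤ |S0| + |T| := abs_add_le _ _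
        _ = |S0| + T := by rw [abs_of_nonneg hTnn]
        _ ≤ D0 + ((1-u) ^ s - S0) := by linarith [hS0le, hTle]
        _ ≤ (1-u) ^ s + 2 * D0 := by
            have := neg_abs_le S0
            linarith [hS0le]
    · have hTnp : T ≤ 0 := Finset.sum_nonpos fun j _ =>
        mul_nonpos_of_nonpos_of_nonneg (hsgn _ (Nat.le_add_right _ _)) (by positivity)
      have hnegT : -T ≤ S0 - (1-u) ^ s := by
        have hneg : HasSum (fun j => -(bcoef s (N0 + j) * u ^ (N0 + j))) (-(((1-u) ^ s) - S0)) :=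
          htail.neg
        have := sum_le_hasSum (Finset.range (N - N0))
          (fun j _ => by
            simp only [neg_nonneg]
            exact mul_nonpos_of_nonpos_of_nonneg (hsgn _ (Nat.le_add_right _ _)) (by positivity))
          hneg
        rw [Finset.sum_neg_distrib] at this
        linarith
      calc |S0 + T| ≤ |S0| + |T| := abs_add_le _ _
        _ = |S0| + -T := by rw [abs_of_nonpos hTnp]
        _ ≤ D0 + (S0 - (1-u) ^ s) := by linarith
        _ ≤ (1-u) ^ s + 2 * D0 := by
            have h1 := le_abs_self S0
            linarith [hS0le, hLpos]

lemma te_bound {a t : ℝ} (ha : 0 < a) (ht : 0 ≤ t) : t * Real.exp (-(a*t)) ≤ 1/a := by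
  have h1 : a*t ≤ Real.exp (a*t) := by linarith [Real.add_one_le_exp (a*t)]
  have h2 : t ≤ Real.exp (a*t) / a := by
    rw [le_div_iff₀ ha]; linarith [h1]
  calc t * Real.exp (-(a*t)) ≤ (Real.exp (a*t)/a) * Real.exp (-(a*t)) :=
        mul_le_mul_of_nonneg_right h2 (Real.exp_pos _).le
    _ = 1/a := by rw [div_mul_eq_mul_div, ← Real.exp_add]; simp

lemma chain_bound {lam c : ℝ} (hlam : 0 < lam) (hc : 0 < c) {K : ℝ} (hK : 0 < K)
    {x : ℝ} (hx : 0 ≤ x) :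
    Real.exp (c*x) * Real.exp (lam/c*(Real.exp (c*x)-1)) *
      Real.exp (-K * (Real.exp (lam/c*(Real.exp (c*x)-1)) - 1))
    ≤ (Real.exp (K/2) * (2/K)) * (Real.exp (K*lam/(4*c)) * (4*c/(K*lam))) *
        Real.exp (-(K*lam/4) * x) := by
  set A := lam/c*(Real.exp (c*x)-1) with hA
  set E := Real.exp A with hE
  have hcx : 1 ≤ Real.exp (c*x) := Real.one_le_exp (by positivity)
  have hA0 : 0 ≤ A := by
    rw [hA]; apply mul_nonneg (by positivity); linarith
  have hE1 : 1 ≤ E := Real.one_le_exp hA0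
  have hEA : A + 1 ≤ E := Real.add_one_le_exp A
  have hAx : lam * x ≤ A := by
    have h1 : c * x + 1 ≤ Real.exp (c*x) := Real.add_one_le_exp _
    have h2 : c * x ≤ Real.exp (c*x) - 1 := by linarith
    calc lam * x = lam/c * (c*x) := by field_simp
      _ ≤ lam/c * (Real.exp (c*x) - 1) := by
          apply mul_le_mul_of_nonneg_left h2 (by positivity)
  have hEc : 1 ≤ E := hE1
  clear_value E
  have hsplit : Real.exp (-K * (E - 1)) =
      Real.exp (-(K/2) * (E-1)) * Real.exp (-(K/4) * (E-1)) * Real.exp (-(K/4) * (E-1)) := by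
    rw [← Real.exp_add, ← Real.exp_add]; ring_nf
  have B1 : E * Real.exp (-(K/2) * (E-1)) ≤ Real.exp (K/2) * (2/K) := by
    have harg : -(K/2) * (E-1) = K/2 + -(K/2 * E) := by ring
    rw [harg, Real.exp_add]
    rw [show E * (Real.exp (K/2) * Real.exp (-(K/2*E))) =
      Real.exp (K/2) * (E * Real.exp (-(K/2*E))) from by ring]
    have := te_bound (a := K/2) (t := E) (by positivity) (by linarith)
    calc Real.exp (K/2) * (E * Real.exp (-(K/2 * E))) ≤ Real.exp (K/2) * (1/(K/2)) := by
          apply mul_le_mul_of_nonneg_left this (Real.exp_pos _).le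
      _ = Real.exp (K/2) * (2/K) := by rw [one_div_div]
  have B2 : Real.exp (c*x) * Real.exp (-(K/4) * (E-1)) ≤
      Real.exp (K*lam/(4*c)) * (4*c/(K*lam)) := by
    have hmono : Real.exp (-(K/4) * (E-1)) ≤ Real.exp (-(K/4) * A) := by
      apply Real.exp_le_exp.2
      nlinarith
    have heq : -(K/4) * A = K*lam/(4*c) - (K*lam/(4*c)) * Real.exp (c*x) := by
      rw [hA]; field_simp; ring
    calc Real.exp (c*x) * Real.exp (-(K/4) * (E-1))
        ≤ Real.exp (c*x) * Real.exp (-(K/4) * A) :=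
          mul_le_mul_of_nonneg_left hmono (Real.exp_pos _).le
      _ = Real.exp (K*lam/(4*c)) * (Real.exp (c*x) * Real.exp (-(K*lam/(4*c) * Real.exp (c*x)))) := by
          rw [heq, Real.exp_sub, Real.exp_neg]; ring
      _ ≤ Real.exp (K*lam/(4*c)) * (1/(K*lam/(4*c))) := by
          apply mul_le_mul_of_nonneg_left
            (te_bound (by positivity) (by positivity)) (Real.exp_pos _).le
      _ = Real.exp (K*lam/(4*c)) * (4*c/(K*lam)) := by rw [one_div_div]
  have B3 : Real.exp (-(K/4) * (E-1)) ≤ Real.exp (-(K*lam/4) * x) := by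
    apply Real.exp_le_exp.2
    have h1 : lam * x ≤ E - 1 := by linarith
    nlinarith [mul_le_mul_of_nonneg_left h1 (le_of_lt (show (0:ℝ) < K/4 by positivity))]
  calc Real.exp (c*x) * E * Real.exp (-K * (E-1))
      = (E * Real.exp (-(K/2) * (E-1))) * (Real.exp (c*x) * Real.exp (-(K/4) * (E-1))) *
          Real.exp (-(K/4) * (E-1)) := by rw [hsplit]; ring
    _ ≤ (Real.exp (K/2) * (2/K)) * (Real.exp (K*lam/(4*c)) * (4*c/(K*lam))) *
          Real.exp (-(K*lam/4) * x) := by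
        apply mul_le_mul (mul_le_mul B1 B2 (by positivity) (by positivity)) B3
          (Real.exp_pos _).le (by positivity)

open MeasureTheory in
lemma integrable_aux {lam c : ℝ} (hlam : 0 < lam) (hc : 0 < c) {K s : ℝ}
    (hK : 0 < K) (hs : -1 < s) :
    IntegrableOn (fun x : ℝ => x ^ s * (Real.exp (c*x) * Real.exp (lam/c*(Real.exp (c*x)-1)) *
      Real.exp (-K * (Real.exp (lam/c*(Real.exp (c*x)-1)) - 1)))) (Set.Ioi 0) := by
  set C : ℝ := (Real.exp (K/2) * (2/K)) * (Real.exp (K*lam/(4*c)) * (4*c/(K*lam))) with hC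
  have hC0 : 0 < C := by rw [hC]; positivity
  have hb : 0 < K*lam/4 := by positivity
  have hint : IntegrableOn (fun x : ℝ => C * (x ^ s * Real.exp (-(K*lam/4) * x))) (Set.Ioi 0) := by
    apply Integrable.const_mul
    have h0 := integrableOn_rpow_mul_exp_neg_mul_rpow hs (by norm_num : (0:ℝ) < 1) hb
    apply h0.congr_fun _ measurableSet_Ioi
    intro x hx
    simp only [Real.rpow_one]
  apply Integrable.mono' hint
  · apply ContinuousOn.aestronglyMeasurable _ measurableSet_Ioi
    apply ContinuousOn.mul
    · intro x hx
      exact (Real.continuousAt_rpow_const x s (Or.inl (ne_of_gt hx))).continuousWithinAt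
    · apply Continuous.continuousOn
      exact ((Real.continuous_exp.comp (continuous_const.mul continuous_id)).mul
        (Real.continuous_exp.comp (continuous_const.mul
          ((Real.continuous_exp.comp (continuous_const.mul continuous_id)).sub continuous_const)))).mul
        (Real.continuous_exp.comp (continuous_const.mul
          ((Real.continuous_exp.comp (continuous_const.mul
            ((Real.continuous_exp.comp (continuous_const.mul continuous_id)).sub continuous_const))).sub continuous_const)))
  · rw [ae_restrict_iff' measurableSet_Ioi]
    apply Filter.Eventually.of_forall
    intro x hx
    have hx0 : (0:ℝ) < x := hx
    have hxs : 0 ≤ x ^ s := Real.rpow_nonneg hx0.le s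
    rw [Real.norm_eq_abs, abs_of_nonneg (by positivity)]
    calc x ^ s * (Real.exp (c*x) * Real.exp (lam/c*(Real.exp (c*x)-1)) *
          Real.exp (-K * (Real.exp (lam/c*(Real.exp (c*x)-1)) - 1)))
        ≤ x ^ s * (C * Real.exp (-(K*lam/4) * x)) := by
          apply mul_le_mul_of_nonneg_left _ hxs
          exact chain_bound hlam hc hK hx0.le
      _ = C * (x ^ s * Real.exp (-(K*lam/4) * x)) := by ring

section Main
variable {α lam c β : ℝ} (hα : 0 < α) (hlam : 0 < lam) (hc : 0 < c) (hβ : 0 < β)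

lemma Elam_gt_one (hlam : 0 < lam) (hc : 0 < c) {x : ℝ} (hx : 0 < x) :
    1 < Real.exp (lam / c * (Real.exp (c * x) - 1)) := by
  have h1 : (0:ℝ) < c * x := by positivity
  have h2 : 1 < Real.exp (c*x) := by
    calc (1:ℝ) = Real.exp 0 := (Real.exp_zero).symm
      _ < _ := Real.exp_lt_exp.2 h1
  have h3 : (0:ℝ) < lam/c * (Real.exp (c*x) - 1) := by
    apply mul_pos (by positivity); linarith
  calc (1:ℝ) = Real.exp 0 := (Real.exp_zero).symm
    _ < _ := Real.exp_lt_exp.2 h3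

lemma Elam_ge (hlam : 0 < lam) (hc : 0 < c) {x : ℝ} (hx : 0 ≤ x) :
    lam * x + 1 ≤ Real.exp (lam / c * (Real.exp (c * x) - 1)) := by
  have h1 : c * x + 1 ≤ Real.exp (c*x) := Real.add_one_le_exp _
  have h2 : lam * x ≤ lam/c * (Real.exp (c*x) - 1) := by
    calc lam * x = lam/c * (c*x) := by field_simp
      _ ≤ lam/c * (Real.exp (c*x) - 1) := by
          apply mul_le_mul_of_nonneg_left (by linarith) (by positivity)
  linarith [Real.add_one_le_exp (lam/c * (Real.exp (c*x) - 1))]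

end Main

section Main2
variable {α lam c β : ℝ}

lemma Econt : Continuous (fun x : ℝ => Real.exp (lam / c * (Real.exp (c * x) - 1))) :=
  Real.continuous_exp.comp (continuous_const.mul
    ((Real.continuous_exp.comp (continuous_const.mul continuous_id)).sub continuous_const))

lemma ucont : Continuous (fun x : ℝ =>
    Real.exp (-α * (Real.exp (lam / c * (Real.exp (c * x) - 1)) - 1))) :=
  Real.continuous_exp.comp (continuous_const.mul (Econt.sub continuous_const))

lemma u_lt_one (hα : 0 < α) (hlam : 0 < lam) (hc : 0 < c) {x : ℝ} (hx : 0 < x) :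
    Real.exp (-α * (Real.exp (lam / c * (Real.exp (c * x) - 1)) - 1)) < 1 := by
  rw [Real.exp_lt_one_iff]
  have := Elam_gt_one hlam hc hx
  nlinarith

lemma pdf_measurable (r : ℕ) (hα : 0 < α) (hlam : 0 < lam) (hc : 0 < c) :
    MeasureTheory.AEStronglyMeasurable (fun x : ℝ => x ^ r * ogeG_pdf α lam c β x)
      (MeasureTheory.volume.restrict (Set.Ioi 0)) := by
  apply ContinuousOn.aestronglyMeasurable _ measurableSet_Ioi
  apply ContinuousOn.mul ((continuous_pow r).continuousOn)
  unfold ogeG_pdf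
  apply ContinuousOn.mul
  · exact (((((continuous_const.mul continuous_const).mul continuous_const).mul
      (Real.continuous_exp.comp (continuous_const.mul continuous_id))).mul Econt).mul
        ucont).continuousOn
  · intro x hx
    have h1 : (1:ℝ) - Real.exp (-α * (Real.exp (lam / c * (Real.exp (c * x) - 1)) - 1)) ≠ 0 := by
      have := u_lt_one hα hlam hc (Set.mem_Ioi.1 hx)
      intro h; nlinarith
    exact (ContinuousAt.rpow_const ((continuous_const.sub ucont).continuousAt)
      (Or.inl h1)).continuousWithinAt

end Main2

open MeasureTheory in
lemma pdf_integrable {α lam c β : ℝ} (hα : 0 < α) (hlam : 0 < lam) (hc : 0 < c)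
    (hβ : 0 < β) (r : ℕ) :
    IntegrableOn (fun x : ℝ => x ^ r * ogeG_pdf α lam c β x) (Set.Ioi 0) := by
  have hrcast : (-1:ℝ) < (r:ℝ) := lt_of_lt_of_le (by norm_num) (Nat.cast_nonneg r)
  rcases le_or_gt 1 β with hb1 | hb1
  · -- β ≥ 1 : bound by α β lam * g₀
    have hint := (integrable_aux hlam hc hα hrcast).const_mul (α*β*lam)
    apply Integrable.mono' hint (pdf_measurable r hα hlam hc)
    rw [ae_restrict_iff' measurableSet_Ioi]
    apply Filter.Eventually.of_forall
    intro x hx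
    have hx0 : (0:ℝ) < x := hx
    set E := Real.exp (lam / c * (Real.exp (c * x) - 1)) with hE
    set u := Real.exp (-α * (E - 1)) with hu
    have hu1 : u ≤ 1 := (u_lt_one hα hlam hc hx0).le
    have hu0 : 0 < u := Real.exp_pos _
    have hrpow0 : 0 ≤ (1 - u) ^ (β - 1) := Real.rpow_nonneg (by linarith) _
    have hrpow1 : (1 - u) ^ (β - 1) ≤ 1 :=
      Real.rpow_le_one (by linarith) (by linarith) (by linarith)
    have hxr : (0:ℝ) ≤ x ^ r := by positivity
    have hpos : (0:ℝ) ≤ x ^ r * ogeG_pdf α lam c β x := by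
      unfold ogeG_pdf
      rw [← hE, ← hu]
      positivity
    rw [Real.norm_eq_abs, abs_of_nonneg hpos]
    unfold ogeG_pdf
    rw [← hE, ← hu, Real.rpow_natCast]
    calc x ^ r * (α * β * lam * Real.exp (c*x) * E * u * (1-u) ^ (β-1))
        ≤ x ^ r * (α * β * lam * Real.exp (c*x) * E * u * 1) := by
          apply mul_le_mul_of_nonneg_left _ hxr
          apply mul_le_mul_of_nonneg_left hrpow1
          positivity
      _ = α*β*lam * (x ^ r * (Real.exp (c*x) * E * Real.exp (-α * (E - 1)))) := by
          rw [← hu]; ring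
  · -- β < 1
    have hs' : (-1:ℝ) < (r:ℝ) + (β - 1) := by linarith
    have hK : (0:ℝ) < α * β := by positivity
    have hint := (integrable_aux hlam hc hK hs').const_mul (α*β*lam*(α*lam) ^ (β-1))
    apply Integrable.mono' hint (pdf_measurable r hα hlam hc)
    rw [ae_restrict_iff' measurableSet_Ioi]
    apply Filter.Eventually.of_forall
    intro x hx
    have hx0 : (0:ℝ) < x := hx
    set E := Real.exp (lam / c * (Real.exp (c * x) - 1)) with hE
    set u := Real.exp (-α * (E - 1)) with hu
    have hE1 : 1 < E := Elam_gt_one hlam hc hx0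
    have hu1 : u < 1 := u_lt_one hα hlam hc hx0
    have hu0 : 0 < u := Real.exp_pos _
    set v := α * (E - 1) with hv
    have hv0 : 0 < v := by rw [hv]; nlinarith
    have huv : u = Real.exp (-v) := by rw [hu, hv]; ring_nf
    -- (a) v e^{-v} ≤ 1 - u
    have ha : v * Real.exp (-v) ≤ 1 - u := by
      rw [huv]
      have h1 : v + 1 ≤ Real.exp v := Real.add_one_le_exp v
      have h2 : Real.exp v * Real.exp (-v) = 1 := by
        rw [← Real.exp_add]; simp
      nlinarith [Real.exp_pos (-v), Real.exp_pos v]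
    have hvev : 0 < v * Real.exp (-v) := by positivity
    -- (b)
    have hb : (1-u) ^ (β-1) ≤ (v * Real.exp (-v)) ^ (β-1) :=
      Real.rpow_le_rpow_of_nonpos hvev ha (by linarith)
    -- (c)
    have hcq : (v * Real.exp (-v)) ^ (β-1) = v ^ (β-1) * Real.exp (-v * (β-1)) := by
      rw [Real.mul_rpow hv0.le (Real.exp_pos _).le,
        Real.rpow_def_of_pos (Real.exp_pos _), Real.log_exp]
    -- (d) u * (1-u)^(β-1) ≤ v^(β-1) * exp (-(α*β)*(E-1))
    have hd : u * (1-u) ^ (β-1) ≤ v ^ (β-1) * Real.exp (-(α*β) * (E-1)) := by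
      have h1 : u * (1-u) ^ (β-1) ≤ u * (v ^ (β-1) * Real.exp (-v * (β-1))) := by
        apply mul_le_mul_of_nonneg_left _ hu0.le
        rw [← hcq]; exact hb
      have h3 : u * Real.exp (-v * (β-1)) = Real.exp (-(α*β) * (E-1)) := by
        rw [huv, ← Real.exp_add]
        congr 1
        rw [hv]; ring
      have h2 : u * (v ^ (β-1) * Real.exp (-v * (β-1))) = v ^ (β-1) * Real.exp (-(α*β) * (E-1)) := by
        rw [← h3]; ring
      linarith
    -- (e) v^(β-1) ≤ (α*lam)^(β-1) * x^(β-1)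
    have hvx : α * lam * x ≤ v := by
      have := Elam_ge hlam hc hx0.le
      rw [hv]
      nlinarith
    have he : v ^ (β-1) ≤ (α*lam) ^ (β-1) * x ^ (β-1) := by
      have h1 : v ^ (β-1) ≤ (α*lam*x) ^ (β-1) :=
        Real.rpow_le_rpow_of_nonpos (by positivity) hvx (by linarith)
      rwa [Real.mul_rpow (by positivity) hx0.le] at h1
    have hv_rpow_pos : (0:ℝ) ≤ v ^ (β-1) := Real.rpow_nonneg hv0.le _
    -- assemble
    have hpos : (0:ℝ) ≤ x ^ r * ogeG_pdf α lam c β x := by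
      unfold ogeG_pdf
      rw [← hE, ← hu]
      have : (0:ℝ) ≤ (1-u) ^ (β-1) := Real.rpow_nonneg (by linarith) _
      positivity
    rw [Real.norm_eq_abs, abs_of_nonneg hpos]
    unfold ogeG_pdf
    rw [← hE, ← hu]
    have hxrr : x ^ ((r:ℝ) + (β-1)) = x ^ r * x ^ (β-1) := by
      rw [Real.rpow_add hx0, Real.rpow_natCast]
    calc x ^ r * (α*β*lam * Real.exp (c*x) * E * u * (1-u) ^ (β-1))
        = (α*β*lam * (x ^ r * Real.exp (c*x) * E)) * (u * (1-u) ^ (β-1)) := by ring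
      _ ≤ (α*β*lam * (x ^ r * Real.exp (c*x) * E)) * (v ^ (β-1) * Real.exp (-(α*β) * (E-1))) := by
          apply mul_le_mul_of_nonneg_left hd (by positivity)
      _ ≤ (α*β*lam * (x ^ r * Real.exp (c*x) * E)) *
            ((α*lam) ^ (β-1) * x ^ (β-1) * Real.exp (-(α*β) * (E-1))) := by
          apply mul_le_mul_of_nonneg_left _ (by positivity)
          exact mul_le_mul_of_nonneg_right he (Real.exp_pos _).le
      _ = α*β*lam*(α*lam) ^ (β-1) *
            (x ^ ((r:ℝ) + (β-1)) * (Real.exp (c*x) * E * Real.exp (-(α*β) * (E-1)))) := by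
          rw [hxrr]; ring

/-- Series representation of the `r`-th moment of the OGE-G distribution:
each integral `∫₀^∞ x^r e^{cx} e^{(λ/c)(e^{cx}-1)} e^{-α(i+1)(e^{(λ/c)(e^{cx}-1)}-1)} dx`
is finite, and the series
`Σ_i α β λ (-1)^i C(β-1, i) ∫₀^∞ ⋯ dx` converges to `∫₀^∞ x^r f(x) dx`. -/
theorem ogeG_moment_series_representation (α lam c β : ℝ)
    (hα : 0 < α) (hlam : 0 < lam) (hc : 0 < c) (hβ : 0 < β) (r : ℕ) :
    (∀ i : ℕ, MeasureTheory.IntegrableOn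
      (fun x : ℝ => x ^ r * Real.exp (c * x) *
        Real.exp (lam / c * (Real.exp (c * x) - 1)) *
        Real.exp (-(α * (i + 1)) * (Real.exp (lam / c * (Real.exp (c * x) - 1)) - 1)))
      (Set.Ioi 0)) ∧
    Filter.Tendsto
      (fun N : ℕ => ∑ i ∈ Finset.range N,
        α * β * lam * (-1 : ℝ) ^ i * gchoose (β - 1) i *
          ∫ x in Set.Ioi (0 : ℝ), x ^ r * Real.exp (c * x) *
            Real.exp (lam / c * (Real.exp (c * x) - 1)) *
            Real.exp (-(α * (i + 1)) *
              (Real.exp (lam / c * (Real.exp (c * x) - 1)) - 1)))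
      Filter.atTop
      (nhds (∫ x in Set.Ioi (0 : ℝ), x ^ r * ogeG_pdf α lam c β x)) := by
  have hrcast : (-1:ℝ) < (r:ℝ) := lt_of_lt_of_le (by norm_num) (Nat.cast_nonneg r)
  have hInt : ∀ i : ℕ, MeasureTheory.IntegrableOn
      (fun x : ℝ => x ^ r * Real.exp (c * x) *
        Real.exp (lam / c * (Real.exp (c * x) - 1)) *
        Real.exp (-(α * (i + 1)) * (Real.exp (lam / c * (Real.exp (c * x) - 1)) - 1)))
      (Set.Ioi 0) := by
    intro i
    have hK : (0:ℝ) < α * ((i:ℝ) + 1) := by positivity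
    apply (integrable_aux hlam hc hK hrcast).congr_fun _ measurableSet_Ioi
    intro x hx
    simp only
    rw [Real.rpow_natCast]
    ring
  refine ⟨hInt, ?_⟩
  obtain ⟨D, hD0, hDb⟩ := bcoef_partial_bound (s := β - 1) (by linarith)
  have hG0 : MeasureTheory.IntegrableOn
      (fun x : ℝ => x ^ r * Real.exp (c * x) * Real.exp (lam / c * (Real.exp (c * x) - 1)) *
        Real.exp (-α * (Real.exp (lam / c * (Real.exp (c * x) - 1)) - 1))) (Set.Ioi 0) := by
    apply (integrable_aux hlam hc hα hrcast).congr_fun _ measurableSet_Ioi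
    intro x hx
    simp only
    rw [Real.rpow_natCast]
    ring
  have hpdfInt := pdf_integrable hα hlam hc hβ r
  have key : Filter.Tendsto
      (fun N : ℕ => ∫ x in Set.Ioi (0:ℝ), ∑ i ∈ Finset.range N,
        α * β * lam * (-1:ℝ)^i * gchoose (β-1) i *
          (x ^ r * Real.exp (c * x) * Real.exp (lam / c * (Real.exp (c * x) - 1)) *
            Real.exp (-(α * (i + 1)) * (Real.exp (lam / c * (Real.exp (c * x) - 1)) - 1))))
      Filter.atTop (nhds (∫ x in Set.Ioi (0:ℝ), x ^ r * ogeG_pdf α lam c β x)) := by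
    apply MeasureTheory.tendsto_integral_of_dominated_convergence
      (bound := fun x => x ^ r * ogeG_pdf α lam c β x +
        (α*β*lam*D) * (x ^ r * Real.exp (c * x) * Real.exp (lam / c * (Real.exp (c * x) - 1)) *
          Real.exp (-α * (Real.exp (lam / c * (Real.exp (c * x) - 1)) - 1))))
    · intro N
      apply Continuous.aestronglyMeasurable
      apply continuous_finset_sum
      intro i _
      exact continuous_const.mul ((((continuous_pow r).mul
        (Real.continuous_exp.comp (continuous_const.mul continuous_id))).mul Econt).mul
          (Real.continuous_exp.comp (continuous_const.mul (Econt.sub continuous_const))))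
    · exact hpdfInt.add (hG0.const_mul _)
    · intro N
      rw [MeasureTheory.ae_restrict_iff' measurableSet_Ioi]
      apply Filter.Eventually.of_forall
      intro x hx
      have hx0 : (0:ℝ) < x := hx
      set E := Real.exp (lam / c * (Real.exp (c * x) - 1)) with hE
      set u := Real.exp (-α * (E - 1)) with hu
      have hu0 : 0 < u := Real.exp_pos _
      have hu1 : u < 1 := u_lt_one hα hlam hc hx0
      have hgu : ∀ i : ℕ, Real.exp (-(α * ((i:ℝ) + 1)) * (E - 1)) = u * u ^ i := by
        intro i
        rw [hu, ← Real.exp_nat_mul, ← Real.exp_add]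
        congr 1
        push_cast
        ring
      have hsum_eq : (∑ i ∈ Finset.range N,
          α * β * lam * (-1:ℝ)^i * gchoose (β-1) i *
            (x ^ r * Real.exp (c * x) * E *
              Real.exp (-(α * (i + 1)) * (E - 1)))) =
          (α*β*lam * (x ^ r * Real.exp (c * x) * E * u)) *
            ∑ i ∈ Finset.range N, bcoef (β-1) i * u ^ i := by
        rw [Finset.mul_sum]
        apply Finset.sum_congr rfl
        intro i _
        rw [hgu i]
        simp only [bcoef]
        ring
      rw [hsum_eq, Real.norm_eq_abs, abs_mul]
      have hcom0 : (0:ℝ) ≤ α*β*lam * (x ^ r * Real.exp (c * x) * E * u) := by positivity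
      rw [abs_of_nonneg hcom0]
      calc (α*β*lam * (x ^ r * Real.exp (c * x) * E * u)) *
            |∑ i ∈ Finset.range N, bcoef (β-1) i * u ^ i|
          ≤ (α*β*lam * (x ^ r * Real.exp (c * x) * E * u)) * ((1-u) ^ (β-1) + D) :=
            mul_le_mul_of_nonneg_left (hDb u hu0.le hu1 N) hcom0
        _ = x ^ r * ogeG_pdf α lam c β x +
            (α*β*lam*D) * (x ^ r * Real.exp (c * x) * E * u) := by
            simp only [ogeG_pdf]
            rw [← hE, ← hu]
            ring
    · rw [MeasureTheory.ae_restrict_iff' measurableSet_Ioi]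
      apply Filter.Eventually.of_forall
      intro x hx
      have hx0 : (0:ℝ) < x := hx
      set E := Real.exp (lam / c * (Real.exp (c * x) - 1)) with hE
      set u := Real.exp (-α * (E - 1)) with hu
      have hu0 : 0 < u := Real.exp_pos _
      have hu1 : u < 1 := u_lt_one hα hlam hc hx0
      have hgu : ∀ i : ℕ, Real.exp (-(α * ((i:ℝ) + 1)) * (E - 1)) = u * u ^ i := by
        intro i
        rw [hu, ← Real.exp_nat_mul, ← Real.exp_add]
        congr 1
        push_cast
        ring
      have hsum_eq : ∀ N : ℕ, (∑ i ∈ Finset.range N,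
          α * β * lam * (-1:ℝ)^i * gchoose (β-1) i *
            (x ^ r * Real.exp (c * x) * E *
              Real.exp (-(α * (i + 1)) * (E - 1)))) =
          (α*β*lam * (x ^ r * Real.exp (c * x) * E * u)) *
            ∑ i ∈ Finset.range N, bcoef (β-1) i * u ^ i := by
        intro N
        rw [Finset.mul_sum]
        apply Finset.sum_congr rfl
        intro i _
        rw [hgu i]
        simp only [bcoef]
        ring
      have hval : x ^ r * ogeG_pdf α lam c β x =
          (α*β*lam * (x ^ r * Real.exp (c * x) * E * u)) * (1-u) ^ (β-1) := by
        simp only [ogeG_pdf]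
        rw [← hE, ← hu]
        ring
      rw [hval]
      apply Filter.Tendsto.congr (fun N => (hsum_eq N).symm)
      exact Filter.Tendsto.const_mul _
        ((bcoef_hasSum (by linarith) hu0.le hu1).tendsto_sum_nat)
  apply Filter.Tendsto.congr _ key
  intro N
  rw [MeasureTheory.integral_finset_sum]
  · exact Finset.sum_congr rfl fun i _ => MeasureTheory.integral_const_mul _ _
  · intro i _
    exact (hInt i).const_mul _
end

section
/- Let α > 0, λ > 0, c > 0, β > 0, and let n, r be natural numbers with 1 ≤ r ≤ n. Then for every x > 0, the density of the r-th order statistic from a sample of size n from the OGE-G distribution, namely f_{r:n}(x) = (1/B(r, n-r+1)) · F(x; α, λ, c, β)^{r-1} · (1 - F(x; α, λ, c, β))^{n-r} · f(x; α, λ, c, β), equals the finite linear combination Σ_{i=0}^{n-r} ((-1)^i · n! / (i! · (r-1)! · (n-r-i)! · (r+i))) · f(x; α, λ, c, (r+i)β), where B(·, ·) is the beta function; that is, f_{r:n} is a weighted combination of OGE-G densities with shape parameters (r+i)β. -/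
/-- The cumulative distribution function of the OGE-G distribution. -/
noncomputable def ogeG_cdf (α lam c β x : ℝ) : ℝ :=
  (1 - Real.exp (-α * (Real.exp (lam / c * (Real.exp (c * x) - 1)) - 1))) ^ β

/-- The beta function `B(a, b) = Γ(a)Γ(b)/Γ(a+b)`. -/
noncomputable def betaFn (a b : ℝ) : ℝ :=
  Real.Gamma a * Real.Gamma b / Real.Gamma (a + b)

/-- The density of the `r`-th order statistic of a sample of size `n` from the
OGE-G distribution is a finite weighted combination of OGE-G densities with
shape parameters `(r + i) β`. -/
theorem ogeG_order_statistic_density (α lam c β : ℝ)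
    (hα : 0 < α) (hlam : 0 < lam) (hc : 0 < c) (hβ : 0 < β)
    (n r : ℕ) (hr : 1 ≤ r) (hrn : r ≤ n) (x : ℝ) (hx : 0 < x) :
    (1 / betaFn (r : ℝ) ((n : ℝ) - r + 1)) *
      (ogeG_cdf α lam c β x) ^ (r - 1) *
      (1 - ogeG_cdf α lam c β x) ^ (n - r) * ogeG_pdf α lam c β x =
    ∑ i ∈ Finset.range (n - r + 1),
      ((-1 : ℝ) ^ i * (Nat.factorial n : ℝ) /
        ((Nat.factorial i : ℝ) * (Nat.factorial (r - 1) : ℝ) *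
          (Nat.factorial (n - r - i) : ℝ) * ((r : ℝ) + i))) *
        ogeG_pdf α lam c (((r : ℝ) + i) * β) x := by
  have hcx : 1 < Real.exp (c * x) := by
    have : Real.exp 0 < Real.exp (c * x) := Real.exp_lt_exp.mpr (by positivity)
    simpa using this
  have hA0 : 0 < Real.exp (lam / c * (Real.exp (c * x) - 1)) - 1 := by
    have h1 : 0 < lam / c * (Real.exp (c * x) - 1) := by
      have : 0 < Real.exp (c * x) - 1 := by linarith
      positivity
    have : Real.exp 0 < Real.exp (lam / c * (Real.exp (c * x) - 1)) :=
      Real.exp_lt_exp.mpr h1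
    simpa using this
  simp only [ogeG_cdf, ogeG_pdf]
  set A := Real.exp (lam / c * (Real.exp (c * x) - 1)) - 1 with hA
  set t := 1 - Real.exp (-α * A) with ht
  have ht0 : 0 < t := by
    have hneg : -α * A < 0 := by nlinarith
    have : Real.exp (-α * A) < Real.exp 0 := Real.exp_lt_exp.mpr hneg
    simp only [Real.exp_zero] at this
    linarith [ht]
  set P := α * lam * Real.exp (c * x) * Real.exp (lam / c * (Real.exp (c * x) - 1)) *
    Real.exp (-α * A) with hP
  have hB : betaFn (r : ℝ) ((n : ℝ) - r + 1) =
      ((r - 1).factorial : ℝ) * ((n - r).factorial : ℝ) / (n.factorial : ℝ) := by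
    unfold betaFn
    have h1 : (r : ℝ) = ((r - 1 : ℕ) : ℝ) + 1 := by
      rw [Nat.cast_sub hr]; ring
    have h2 : (n : ℝ) - r + 1 = ((n - r : ℕ) : ℝ) + 1 := by
      rw [Nat.cast_sub hrn]
    have h3 : (r : ℝ) + ((n : ℝ) - r + 1) = (n : ℝ) + 1 := by ring
    rw [h3, h2, h1, Real.Gamma_nat_eq_factorial, Real.Gamma_nat_eq_factorial]
    rw [show ((n : ℝ) + 1) = ((n : ℕ) : ℝ) + 1 by norm_num, Real.Gamma_nat_eq_factorial]
  have hnat : ∀ k : ℕ, (t ^ β) ^ k = t ^ (β * (k : ℝ)) := fun k => by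
    rw [← Real.rpow_natCast (t ^ β) k, ← Real.rpow_mul ht0.le]
  have expand : (1 - t ^ β) ^ (n - r) =
      ∑ i ∈ Finset.range (n - r + 1),
        (-1 : ℝ) ^ i * (t ^ β) ^ i * ((n - r).choose i : ℝ) := by
    rw [show (1 - t ^ β) = -(t ^ β) + 1 by ring, add_pow]
    refine Finset.sum_congr rfl fun i hi => ?_
    rw [neg_pow]
    ring
  have hLHS : (1 / betaFn (r : ℝ) ((n : ℝ) - r + 1)) * (t ^ β) ^ (r - 1) *
      (1 - t ^ β) ^ (n - r) *
      (α * β * lam * Real.exp (c * x) * Real.exp (lam / c * (Real.exp (c * x) - 1)) *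
        Real.exp (-α * A) * t ^ (β - 1)) =
      ∑ i ∈ Finset.range (n - r + 1),
        (1 / betaFn (r : ℝ) ((n : ℝ) - r + 1)) * (t ^ β) ^ (r - 1) *
          ((-1 : ℝ) ^ i * (t ^ β) ^ i * ((n - r).choose i : ℝ)) *
          (α * β * lam * Real.exp (c * x) * Real.exp (lam / c * (Real.exp (c * x) - 1)) *
            Real.exp (-α * A) * t ^ (β - 1)) := by
    rw [expand, Finset.mul_sum, Finset.sum_mul]
  rw [hLHS]
  refine Finset.sum_congr rfl fun i hi => ?_
  have him : i ≤ n - r := by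
    have := Finset.mem_range.mp hi; omega
  have hr1 : (1 : ℝ) ≤ (r : ℝ) := by exact_mod_cast hr
  have hri : (0 : ℝ) < (r : ℝ) + (i : ℝ) := by
    have : (0 : ℝ) ≤ (i : ℝ) := Nat.cast_nonneg i
    linarith
  have hpow : t ^ (β * ((r - 1 : ℕ) : ℝ)) * (t ^ (β * (i : ℝ)) * t ^ (β - 1)) =
      t ^ (((r : ℝ) + (i : ℝ)) * β - 1) := by
    rw [← Real.rpow_add ht0, ← Real.rpow_add ht0]
    congr 1
    rw [Nat.cast_sub hr]
    push_cast
    ring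
  have hcoef : (1 / betaFn (r : ℝ) ((n : ℝ) - r + 1)) * (((n - r).choose i : ℕ) : ℝ) * β =
      ((n.factorial : ℝ) /
        ((i.factorial : ℝ) * ((r - 1).factorial : ℝ) * ((n - r - i).factorial : ℝ) *
          ((r : ℝ) + i))) * (((r : ℝ) + i) * β) := by
    rw [hB, Nat.cast_choose ℝ him]
    have f1 : ((r - 1).factorial : ℝ) ≠ 0 := Nat.cast_ne_zero.mpr (Nat.factorial_ne_zero _)
    have f2 : ((n - r).factorial : ℝ) ≠ 0 := Nat.cast_ne_zero.mpr (Nat.factorial_ne_zero _)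
    have f3 : ((n.factorial : ℕ) : ℝ) ≠ 0 := Nat.cast_ne_zero.mpr (Nat.factorial_ne_zero _)
    have f4 : ((i.factorial : ℕ) : ℝ) ≠ 0 := Nat.cast_ne_zero.mpr (Nat.factorial_ne_zero _)
    have f5 : ((n - r - i).factorial : ℝ) ≠ 0 := Nat.cast_ne_zero.mpr (Nat.factorial_ne_zero _)
    field_simp
  rw [hnat, hnat]
  linear_combination
    ((1 / betaFn (r : ℝ) ((n : ℝ) - r + 1)) * (-1 : ℝ) ^ i * (((n - r).choose i : ℕ) : ℝ) *
        β * P) * hpow +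
      ((-1 : ℝ) ^ i * P * t ^ (((r : ℝ) + (i : ℝ)) * β - 1)) * hcoef
end
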